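/- arXiv:2312.13791 — 6 statements merged into one kernel-verified Lean document; each statement's English description precedes it below -/
import Mathlib

section
/- Let v be an additive valuation, S a finite set of goods, g an element not in S, and α ∈ (0,1]. If v(A) ≥ α·μ(S) where μ denotes the 1-out-of-2 maximin share, then v(A) + v(g) ≥ α·μ(S ∪ {g}). -/
noncomputable def mms {G : Type*} [DecidableEq G] (val : G → ℝ) (S : Finset G) : ℝ :=
  S.powerset.sup' ⟨∅, Finset.empty_mem_powerset S⟩
    (fun X => min (∑ g ∈ X, val g) (∑ g ∈ S \ X, val g))

lemma le_mms {G : Type*} [DecidableEq G] (val : G → ℝ) (S X : Finset G) (hX : X ⊆ S) :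
    min (∑ g ∈ X, val g) (∑ g ∈ S \ X, val g) ≤ mms val S := by
  unfold mms
  exact Finset.le_sup' (fun X => min (∑ g ∈ X, val g) (∑ g ∈ S \ X, val g)) (Finset.mem_powerset.mpr hX)

lemma min_add_left (a b c : ℝ) (hc : 0 ≤ c) : min (a + c) b ≤ min a b + c := by
  calc min (a + c) b ≤ min (a + c) (b + c) :=
        min_le_min le_rfl (le_add_of_nonneg_right hc)
    _ = min a b + c := min_add_add_right a b c

lemma min_add_right (a b c : ℝ) (hc : 0 ≤ c) : min a (b + c) ≤ min a b + c := by
  calc min a (b + c) ≤ min (a + c) (b + c) :=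
        min_le_min (le_add_of_nonneg_right hc) le_rfl
    _ = min a b + c := min_add_add_right a b c

theorem mms_add_good {G : Type*} [DecidableEq G] (val : G → ℝ)
    (hval : ∀ g, 0 ≤ val g) (S A : Finset G) (g : G) (hg : g ∉ S)
    (α : ℝ) (hα0 : 0 < α) (hα1 : α ≤ 1)
    (hA : ∑ x ∈ A, val x ≥ α * mms val S) :
    (∑ x ∈ A, val x) + val g ≥ α * mms val (S ∪ {g}) := by
  have key : mms val (S ∪ {g}) ≤ mms val S + val g := by
    apply Finset.sup'_le
    intro X hX
    rw [Finset.mem_powerset] at hX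
    by_cases hgX : g ∈ X
    · have hY : X \ {g} ⊆ S := by
        intro x hx
        simp only [Finset.mem_sdiff, Finset.mem_singleton] at hx
        rcases Finset.mem_union.mp (hX hx.1) with h | h
        · exact h
        · exact absurd (Finset.mem_singleton.mp h) hx.2
      have hXeq : ∑ x ∈ X, val x = (∑ x ∈ X \ {g}, val x) + val g := by
        rw [Finset.sum_sdiff_eq_sub (Finset.singleton_subset_iff.mpr hgX),
          Finset.sum_singleton]; ring
      have hcompl : (S ∪ {g}) \ X = S \ (X \ {g}) := by
        ext x
        simp only [Finset.mem_sdiff, Finset.mem_union, Finset.mem_singleton]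
        constructor
        · rintro ⟨h | h, h2⟩
          · exact ⟨h, fun h3 => h2 h3.1⟩
          · subst h; exact absurd hgX h2
        · rintro ⟨h1, h2⟩
          refine ⟨Or.inl h1, fun h3 => ?_⟩
          rcases eq_or_ne x g with rfl | hne
          · exact hg h1
          · exact h2 ⟨h3, hne⟩
      rw [hXeq, hcompl]
      calc min ((∑ x ∈ X \ {g}, val x) + val g) (∑ x ∈ S \ (X \ {g}), val x)
          ≤ min (∑ x ∈ X \ {g}, val x) (∑ x ∈ S \ (X \ {g}), val x) + val g :=
            min_add_left _ _ _ (hval g)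
        _ ≤ mms val S + val g := by
            have := le_mms val S (X \ {g}) hY; linarith
    · have hXS : X ⊆ S := by
        intro x hx
        rcases Finset.mem_union.mp (hX hx) with h | h
        · exact h
        · exact absurd (Finset.mem_singleton.mp h ▸ hx) hgX
      have hcompl : (S ∪ {g}) \ X = (S \ X) ∪ {g} := by
        ext x
        simp only [Finset.mem_sdiff, Finset.mem_union, Finset.mem_singleton]
        constructor
        · rintro ⟨h | h, h2⟩
          · exact Or.inl ⟨h, h2⟩
          · exact Or.inr h
        · rintro (⟨h1, h2⟩ | h)
          · exact ⟨Or.inl h1, h2⟩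
          · subst h; exact ⟨Or.inr rfl, hgX⟩
      have hgnot : g ∉ S \ X := fun h => hg (Finset.mem_sdiff.mp h).1
      rw [hcompl, Finset.sum_union (Finset.disjoint_singleton_right.mpr hgnot),
        Finset.sum_singleton]
      calc min (∑ x ∈ X, val x) ((∑ x ∈ S \ X, val x) + val g)
          ≤ min (∑ x ∈ X, val x) (∑ x ∈ S \ X, val x) + val g :=
            min_add_right _ _ _ (hval g)
        _ ≤ mms val S + val g := by
            have := le_mms val S X hXS; linarith
  have hmms0 : 0 ≤ mms val S := by
    have h1 := le_mms val S ∅ (Finset.empty_subset S)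
    simp only [Finset.sum_empty, Finset.sdiff_empty] at h1
    have h2 : min 0 (∑ g ∈ S, val g) = 0 :=
      min_eq_left (Finset.sum_nonneg fun i _ => hval i)
    linarith [h1, h2.ge, h2.le]
  have h0 := hval g
  have hm : α * mms val (S ∪ {g}) ≤ α * (mms val S + val g) :=
    mul_le_mul_of_nonneg_left key hα0.le
  nlinarith
end

section
/- Let v be an additive valuation, A and B disjoint finite sets of goods with v(B) ≤ (1 + 1/k)·v(A) where k = |A| ≥ 3 (interpreting as: v(B) ≤ ((k+1)/k)·v(A)). Then the 1-out-of-2 maximin share μ(A ∪ B) satisfies v(A) ≥ (2k/(2k+1))·μ(A ∪ B); in particular, for k ≥ 3, v(A) ≥ (6/7)·μ(A ∪ B). -/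
theorem mms_large_bundle {G : Type*} [DecidableEq G] (val : G → ℝ)
    (hval : ∀ g, 0 ≤ val g) (A B : Finset G) (hAB : Disjoint A B)
    (k : ℕ) (hk : A.card = k) (hk3 : 3 ≤ k)
    (hB : ∑ g ∈ B, val g ≤ ((k : ℝ) + 1) / k * ∑ g ∈ A, val g) :
    ∑ g ∈ A, val g ≥ (2 * (k : ℝ)) / (2 * k + 1) * mms val (A ∪ B) ∧
    ∑ g ∈ A, val g ≥ 6 / 7 * mms val (A ∪ B) := by
  set T := A ∪ B with hT
  have hST : ∑ g ∈ T, val g = ∑ g ∈ A, val g + ∑ g ∈ B, val g :=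
    Finset.sum_union hAB
  have hkr : (3 : ℝ) ≤ (k : ℝ) := by exact_mod_cast hk3
  have hkpos : (0 : ℝ) < k := by linarith
  -- mms ≤ v(T)/2
  have hμ : mms val T ≤ (∑ g ∈ T, val g) / 2 := by
    apply Finset.sup'_le
    intro X hX
    rw [Finset.mem_powerset] at hX
    have hsum : ∑ g ∈ T \ X, val g + ∑ g ∈ X, val g = ∑ g ∈ T, val g :=
      Finset.sum_sdiff hX
    have h1 : min (∑ g ∈ X, val g) (∑ g ∈ T \ X, val g) ≤ ∑ g ∈ X, val g :=
      min_le_left _ _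
    have h2 : min (∑ g ∈ X, val g) (∑ g ∈ T \ X, val g) ≤ ∑ g ∈ T \ X, val g :=
      min_le_right _ _
    linarith
  -- mms ≥ 0
  have hμ0 : 0 ≤ mms val T := by
    have h := Finset.le_sup' (f := fun X => min (∑ g ∈ X, val g) (∑ g ∈ T \ X, val g))
      (Finset.empty_mem_powerset T)
    have hTnn : 0 ≤ ∑ g ∈ T \ ∅, val g := Finset.sum_nonneg fun g _ => hval g
    simp only [Finset.sum_empty] at h
    calc (0 : ℝ) = min 0 (∑ g ∈ T \ ∅, val g) := (min_eq_left hTnn).symm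
      _ ≤ mms val T := h
  have hvT : ∑ g ∈ T, val g ≤ (2 * (k : ℝ) + 1) / k * ∑ g ∈ A, val g := by
    rw [hST]
    have : ((k : ℝ) + 1) / k * ∑ g ∈ A, val g + ∑ g ∈ A, val g
        = (2 * (k : ℝ) + 1) / k * ∑ g ∈ A, val g := by
      field_simp
      ring
    linarith
  have key : mms val T ≤ (2 * (k : ℝ) + 1) / (2 * k) * ∑ g ∈ A, val g := by
    have : (2 * (k : ℝ) + 1) / k * (∑ g ∈ A, val g) / 2
        = (2 * (k : ℝ) + 1) / (2 * k) * ∑ g ∈ A, val g := by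
      rw [div_mul_eq_mul_div, div_div, div_mul_eq_mul_div, mul_comm (k:ℝ) 2]
    calc mms val T ≤ (∑ g ∈ T, val g) / 2 := hμ
      _ ≤ (2 * (k : ℝ) + 1) / k * (∑ g ∈ A, val g) / 2 := by linarith
      _ = _ := this
  have h2k1 : (0 : ℝ) < 2 * k + 1 := by linarith
  constructor
  · have := mul_le_mul_of_nonneg_left key (by positivity :
      (0 : ℝ) ≤ (2 * (k : ℝ)) / (2 * k + 1))
    have heq : (2 * (k : ℝ)) / (2 * k + 1) * ((2 * (k : ℝ) + 1) / (2 * k) * ∑ g ∈ A, val g)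
        = ∑ g ∈ A, val g := by
      field_simp
    linarith [this, heq ▸ this]
  · have hfrac : (6 : ℝ) / 7 ≤ (2 * (k : ℝ)) / (2 * k + 1) := by
      rw [div_le_div_iff₀ (by norm_num) h2k1]; linarith
    have h1 : (6 : ℝ) / 7 * mms val T ≤ (2 * (k : ℝ)) / (2 * k + 1) * mms val T :=
      mul_le_mul_of_nonneg_right hfrac hμ0
    have := mul_le_mul_of_nonneg_left key (by positivity :
      (0 : ℝ) ≤ (2 * (k : ℝ)) / (2 * k + 1))
    have heq : (2 * (k : ℝ)) / (2 * k + 1) * ((2 * (k : ℝ) + 1) / (2 * k) * ∑ g ∈ A, val g)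
        = ∑ g ∈ A, val g := by
      field_simp
    linarith [heq ▸ this]
end

section
/- Let v be an additive valuation and A, B disjoint finite sets of goods with |A| = 1, say A = {a}, and suppose v(a) ≥ v(B ∖ {g}) for every g ∈ B with v(g) > 0 (equivalently, removing the least-valued positively-valued good of B leaves value at most v(a)), and moreover every positively-valued good of B has value at least the minimum positively-valued good. If additionally v(B minus its least positively-valued good) ≤ v(A), then the 1-out-of-2 maximin share of A ∪ B is at most v(A). -/
lemma key_aux {G : Type*} [DecidableEq G] (val : G → ℝ)
    (hval : ∀ g, 0 ≤ val g) (a : G) (B : Finset G) (ha : a ∉ B)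
    (ghat : G) (hghat : ghat ∈ B)
    (hmin : ∀ g ∈ B, 0 < val g → val ghat ≤ val g)
    (hle : ∑ g ∈ B \ {ghat}, val g ≤ val a)
    (X : Finset G) (hX : X ⊆ {a} ∪ B) (haX : a ∈ X) :
    min (∑ g ∈ X, val g) (∑ g ∈ ({a} ∪ B) \ X, val g) ≤ val a := by
  set Y : Finset G := ({a} ∪ B) \ X with hY
  have hYB : Y ⊆ B := by
    intro g hg
    rw [hY, Finset.mem_sdiff, Finset.mem_union, Finset.mem_singleton] at hg
    rcases hg.1 with h | h
    · exact absurd (h ▸ haX) hg.2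
    · exact h
  by_cases hg : ghat ∈ Y
  · -- ghat in Y
    have hgX : ghat ∉ X := (Finset.mem_sdiff.mp hg).2
    have hXB : X \ {a} ⊆ B \ {ghat} := by
      intro g hgm
      rw [Finset.mem_sdiff, Finset.mem_singleton] at hgm
      rcases Finset.mem_union.mp (hX hgm.1) with h | h
      · exact absurd (Finset.mem_singleton.mp h) hgm.2
      · refine Finset.mem_sdiff.mpr ⟨h, ?_⟩
        rw [Finset.mem_singleton]
        rintro rfl; exact hgX hgm.1
    have hYB' : Y \ {ghat} ⊆ B \ {ghat} := by
      intro g hgm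
      rw [Finset.mem_sdiff, Finset.mem_singleton] at hgm
      exact Finset.mem_sdiff.mpr ⟨hYB hgm.1, Finset.mem_singleton.not.mpr hgm.2⟩
    by_cases h : ∑ g ∈ Y, val g ≤ val a
    · exact le_trans (min_le_right _ _) h
    · push_neg at h
      have hdisj : Disjoint (X \ {a}) (Y \ {ghat}) := by
        apply Finset.disjoint_left.mpr
        intro g h1 h2
        exact (Finset.mem_sdiff.mp (Finset.mem_sdiff.mp h2).1).2 (Finset.mem_sdiff.mp h1).1
      have hsum : ∑ g ∈ X \ {a}, val g + ∑ g ∈ Y \ {ghat}, val g ≤ val a := by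
        rw [← Finset.sum_union hdisj]
        refine le_trans (Finset.sum_le_sum_of_subset_of_nonneg
          (Finset.union_subset hXB hYB') (fun g _ _ => hval g)) hle
      have hYsum : ∑ g ∈ Y, val g = ∑ g ∈ Y \ {ghat}, val g + val ghat :=
        Finset.sum_eq_sum_sdiff_singleton_add hg val
      have hXsmall : ∑ g ∈ X \ {a}, val g < val ghat := by
        rw [hYsum] at h; linarith
      have hXzero : ∑ g ∈ X \ {a}, val g = 0 := by
        apply Finset.sum_eq_zero
        intro g hgm
        by_contra hne
        have hpos : 0 < val g := lt_of_le_of_ne (hval g) (Ne.symm hne)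
        have h1 : val ghat ≤ val g := hmin g (Finset.mem_sdiff.mp (hXB hgm)).1 hpos
        have h2 : val g ≤ ∑ g ∈ X \ {a}, val g :=
          Finset.single_le_sum (fun g _ => hval g) hgm
        linarith
      have hXsum : ∑ g ∈ X, val g = val a := by
        rw [Finset.sum_eq_sum_sdiff_singleton_add haX, hXzero, zero_add]
      exact le_trans (min_le_left _ _) hXsum.le
  · -- ghat not in Y
    have hYB' : Y ⊆ B \ {ghat} := by
      intro g hgm
      refine Finset.mem_sdiff.mpr ⟨hYB hgm, ?_⟩
      rw [Finset.mem_singleton]; rintro rfl; exact hg hgm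
    exact le_trans (min_le_right _ _)
      (le_trans (Finset.sum_le_sum_of_subset_of_nonneg hYB' (fun g _ _ => hval g)) hle)

theorem mms_singleton_bundle {G : Type*} [DecidableEq G] (val : G → ℝ)
    (hval : ∀ g, 0 ≤ val g) (a : G) (B : Finset G) (ha : a ∉ B)
    (ghat : G) (hghat : ghat ∈ B)
    (hmin : ∀ g ∈ B, 0 < val g → val ghat ≤ val g)
    (hle : ∑ g ∈ B \ {ghat}, val g ≤ val a) :
    mms val ({a} ∪ B) ≤ val a := by
  unfold mms
  apply Finset.sup'_le
  intro X hX
  rw [Finset.mem_powerset] at hX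
  by_cases haX : a ∈ X
  · exact key_aux val hval a B ha ghat hghat hmin hle X hX haX
  · have haS : a ∈ ({a} ∪ B) \ X :=
      Finset.mem_sdiff.mpr ⟨Finset.mem_union_left _ (Finset.mem_singleton_self a), haX⟩
    have hXX : ({a} ∪ B) \ (({a} ∪ B) \ X) = X := Finset.sdiff_sdiff_eq_self hX
    have := key_aux val hval a B ha ghat hghat hmin hle (({a} ∪ B) \ X)
      (Finset.sdiff_subset) haS
    rw [hXX, min_comm] at this
    exact this
end

section
/- Suppose all agents' valuations satisfy the restricted-additive property: there is a base value function v̄ on goods such that for every agent i and good g, v_i(g) ∈ {0, v̄(g)}. If each agent's bundle consists only of goods she positively values (A_i ⊆ P_i for all i), then the envy graph of the allocation is acyclic. -/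
theorem restricted_additive_envy_acyclic {G : Type*} [DecidableEq G] (n : ℕ)
    (val : Fin n → G → ℝ) (vbar : G → ℝ) (hvbar : ∀ g, 0 < vbar g)
    (hres : ∀ i g, val i g = 0 ∨ val i g = vbar g)
    (A : Fin n → Finset G)
    (hdisj : ∀ i j, i ≠ j → Disjoint (A i) (A j))
    (hPos : ∀ i, ∀ g ∈ A i, 0 < val i g) :
    ¬ ∃ (k : ℕ) (c : ℕ → Fin n), 0 < k ∧ c k = c 0 ∧
      ∀ t < k,
        ∑ g ∈ A (c t), val (c t) g < ∑ g ∈ A (c (t + 1)), val (c t) g := by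
  rintro ⟨k, c, hk, hck, henvy⟩
  set W : Fin n → ℝ := fun i => ∑ g ∈ A i, vbar g with hW
  have hself : ∀ i, ∑ g ∈ A i, val i g = W i := by
    intro i
    refine Finset.sum_congr rfl fun g hg => ?_
    rcases hres i g with h | h
    · exact absurd (hPos i g hg) (by rw [h]; exact lt_irrefl 0)
    · exact h
  have hle : ∀ i j, ∑ g ∈ A j, val i g ≤ W j := by
    intro i j
    refine Finset.sum_le_sum fun g _ => ?_
    rcases hres i g with h | h
    · rw [h]; exact (hvbar g).le
    · rw [h]
  have hstep : ∀ t < k, W (c t) < W (c (t + 1)) := by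
    intro t ht
    calc W (c t) = ∑ g ∈ A (c t), val (c t) g := (hself _).symm
      _ < ∑ g ∈ A (c (t + 1)), val (c t) g := henvy t ht
      _ ≤ W (c (t + 1)) := hle _ _
  have hmono : ∀ t ≤ k, W (c 0) ≤ W (c t) := by
    intro t ht
    induction t with
    | zero => exact le_refl _
    | succ m ih =>
      exact le_of_lt (lt_of_le_of_lt (ih (Nat.le_of_succ_le ht))
        (hstep m (Nat.lt_of_succ_le ht)))
  have h1 : W (c 0) < W (c k) := by
    obtain ⟨m, rfl⟩ : ∃ m, k = m + 1 := ⟨k - 1, (Nat.succ_pred_eq_of_pos hk).symm⟩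
    exact lt_of_le_of_lt (hmono m (Nat.le_succ m)) (hstep m (Nat.lt_succ_self m))
  rw [hck] at h1
  exact lt_irrefl _ h1
end

section
/- Let v be an additive nonnegative valuation, S a finite set of goods, ℓ ∈ S with v(ℓ) > 0, and ĝ ∉ S with v(ĝ) > 0 satisfying v(ℓ) ≥ γ·v(ĝ) for γ ∈ (0,1]. If v(A) ≥ v(S) for a set A, then v(A ∪ {ℓ}) ≥ min(1, 2γ)·v((S ∪ {ĝ}) ∖ {ℓ}). -/
theorem tefx_transfer {G : Type*} [DecidableEq G] (val : G → ℝ)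
    (hval : ∀ g, 0 ≤ val g)
    (A S : Finset G) (ℓ ghat : G)
    (hℓ : ℓ ∈ S) (hghat : ghat ∉ S) (hdisj : Disjoint A (S ∪ {ghat}))
    (γ : ℝ) (hγ0 : 0 < γ) (hγ1 : γ ≤ 1)
    (hvℓ : val ℓ ≥ γ * val ghat)
    (hA : ∑ g ∈ A, val g ≥ ∑ g ∈ S, val g) :
    ∑ g ∈ A ∪ {ℓ}, val g ≥
      min 1 (2 * γ) * ∑ g ∈ (S ∪ {ghat}) \ {ℓ}, val g := by
  have hℓA : ℓ ∉ A := fun h =>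
    (Finset.disjoint_left.mp hdisj h) (Finset.mem_union_left _ hℓ)
  have h1 : ∑ g ∈ A ∪ {ℓ}, val g = ∑ g ∈ A, val g + val ℓ := by
    rw [Finset.sum_union (Finset.disjoint_singleton_right.mpr hℓA),
      Finset.sum_singleton]
  have hset : (S ∪ {ghat}) \ {ℓ} = (S.erase ℓ) ∪ {ghat} := by
    ext x
    simp only [Finset.mem_sdiff, Finset.mem_union, Finset.mem_singleton,
      Finset.mem_erase]
    constructor
    · rintro ⟨h | h, hne⟩
      · exact Or.inl ⟨hne, h⟩
      · exact Or.inr h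
    · rintro (⟨hne, h⟩ | h)
      · exact ⟨Or.inl h, hne⟩
      · exact ⟨Or.inr h, fun hx => hghat ((hx.symm.trans h) ▸ hℓ)⟩
  have hge : ghat ∉ S.erase ℓ := fun h => hghat (Finset.mem_of_mem_erase h)
  have h2 : ∑ g ∈ (S ∪ {ghat}) \ {ℓ}, val g
      = ∑ g ∈ S.erase ℓ, val g + val ghat := by
    rw [hset, Finset.sum_union (Finset.disjoint_singleton_right.mpr hge),
      Finset.sum_singleton]
  have h3 : ∑ g ∈ S.erase ℓ, val g + val ℓ = ∑ g ∈ S, val g :=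
    Finset.sum_erase_add S val hℓ
  have hE : 0 ≤ ∑ g ∈ S.erase ℓ, val g := Finset.sum_nonneg fun g _ => hval g
  have hg : 0 ≤ val ghat := hval ghat
  rw [h1, h2]
  rcases min_cases 1 (2 * γ) with ⟨hm, hle⟩ | ⟨hm, hle⟩ <;> rw [hm] <;>
    nlinarith [hval ℓ]
end

section
/- Let v be an additive nonnegative valuation and A, B disjoint finite sets of goods. Suppose every good in B that v values positively has value ≥ v(ĝ) for a distinguished good ĝ ∈ B, v(B ∖ {ĝ}) ≤ v(A), and v(ĝ) ≤ (1/3)·v(A). Then the 1-out-of-2 maximin share μ(A ∪ B) satisfies v(A) ≥ (6/7)·μ(A ∪ B). -/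
lemma mms_le_half {G : Type*} [DecidableEq G] (val : G → ℝ) (S : Finset G) :
    mms val S ≤ (∑ g ∈ S, val g) / 2 := by
  apply Finset.sup'_le
  intro X hX
  have hXS : X ⊆ S := Finset.mem_powerset.mp hX
  have hsum : ∑ g ∈ S \ X, val g + ∑ g ∈ X, val g = ∑ g ∈ S, val g :=
    Finset.sum_sdiff hXS
  cases le_total (∑ g ∈ X, val g) (∑ g ∈ S \ X, val g) with
  | inl h => rw [min_eq_left h]; linarith
  | inr h => rw [min_eq_right h]; linarith

theorem mms_two_goods_small_ghat {G : Type*} [DecidableEq G] (val : G → ℝ)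
    (hval : ∀ g, 0 ≤ val g) (A B : Finset G) (hAB : Disjoint A B)
    (ghat : G) (hghat : ghat ∈ B)
    (hmin : ∀ g ∈ B, 0 < val g → val ghat ≤ val g)
    (hle : ∑ g ∈ B \ {ghat}, val g ≤ ∑ g ∈ A, val g)
    (hghat_small : val ghat ≤ 1 / 3 * ∑ g ∈ A, val g) :
    ∑ g ∈ A, val g ≥ 6 / 7 * mms val (A ∪ B) := by
  have hB : ∑ g ∈ B, val g = ∑ g ∈ B \ {ghat}, val g + val ghat := by
    rw [← Finset.sum_sdiff (Finset.singleton_subset_iff.mpr hghat)]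
    simp
  have hunion : ∑ g ∈ A ∪ B, val g = ∑ g ∈ A, val g + ∑ g ∈ B, val g :=
    Finset.sum_union hAB
  have h := mms_le_half val (A ∪ B)
  linarith
end
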